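/- Let A be a unital C*-algebra, B a unital C*-subalgebra containing the unit, E : A → B a conditional expectation, x ∈ A strictly positive, and y ∈ A selfadjoint. Let b ∈ B satisfy that Im(bx) is strictly positive, and let w ∈ B have Im w strictly positive. Then h_y(w) is well defined (all required inverses exist), and if moreover h_y(w) is invertible, then h_y(w)·b and all elements required to form g_b(w) := b·h_x(h_y(w)·b) are invertible, and Im( b·h_x(h_y(w)·b) ) ≥ E[(Im(bx))^{-1}]^{-1}, which is strictly positive. In particular the map g_b sends the operator upper half-plane of B strictly into itself. -/

import Mathlib

noncomputable section

/-- The imaginary part `Im a = (a - a*)/(2i)` of an element of a complex star algebra. -/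
def aIm {A : Type*} [NonUnitalRing A] [StarRing A] [Module ℂ A] (a : A) : A :=
  ((2 * Complex.I)⁻¹ : ℂ) • (a - star a)

/-- `k > 0`: `k` is selfadjoint, nonnegative and invertible. -/
def StrictlyPos {A : Type*} [Ring A] [StarRing A] [PartialOrder A] (k : A) : Prop :=
  IsSelfAdjoint k ∧ 0 ≤ k ∧ IsUnit k

/-- The h transform `h_z(v) = v⁻¹ - E[(v⁻¹ - z)⁻¹]⁻¹`. -/
def hT {A : Type*} [Ring A] [Module ℂ A] (E : A →ₗ[ℂ] A) (z v : A) : A :=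
  Ring.inverse v - Ring.inverse (E (Ring.inverse (Ring.inverse v - z)))

section Helpers

private lemma isUnit_of_one_sided {M : Type*} [Monoid M] {x y d : M}
    (h1 : x * d = 1) (h2 : d * y = 1) : IsUnit d := by
  have hxy : x = y := left_inv_eq_right_inv h1 h2
  exact ⟨⟨d, y, h2, hxy ▸ h1⟩, rfl⟩

private lemma ring_inverse_mul {M : Type*} [MonoidWithZero M] {a b : M}
    (ha : IsUnit a) (hb : IsUnit b) :
    Ring.inverse (a * b) = Ring.inverse b * Ring.inverse a := by
  have h : (Ring.inverse b * Ring.inverse a) * (a * b) = 1 := by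
    rw [mul_assoc, ← mul_assoc (Ring.inverse a), Ring.inverse_mul_cancel a ha, one_mul,
      Ring.inverse_mul_cancel b hb]
  calc Ring.inverse (a * b) = (Ring.inverse b * Ring.inverse a) * ((a * b) * Ring.inverse (a * b)) := by
        rw [← mul_assoc, h, one_mul]
    _ = Ring.inverse b * Ring.inverse a := by
        rw [Ring.mul_inverse_cancel _ (ha.mul hb), mul_one]

private lemma ring_inverse_inverse {M : Type*} [MonoidWithZero M] {a : M} (ha : IsUnit a) :
    Ring.inverse (Ring.inverse a) = a := by
  calc Ring.inverse (Ring.inverse a)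
      = (a * Ring.inverse a) * Ring.inverse (Ring.inverse a) := by
        rw [Ring.mul_inverse_cancel a ha, one_mul]
    _ = a := by
        rw [mul_assoc, Ring.mul_inverse_cancel _ (isUnit_ringInverse.mpr ha), mul_one]

variable {A : Type*} [CStarAlgebra A] [PartialOrder A] [StarOrderedRing A]

lemma aIm_isSelfAdjoint (a : A) : IsSelfAdjoint (aIm a) := by
  have hc : star ((2 * Complex.I)⁻¹ : ℂ) = -((2 * Complex.I)⁻¹ : ℂ) := by
    simp [map_inv₀, Complex.conj_I, mul_neg, inv_neg]
  rw [IsSelfAdjoint, aIm, star_smul, hc, star_sub, star_star, neg_smul, ← smul_neg, neg_sub]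

lemma aIm_neg (a : A) : aIm (-a) = -aIm a := by
  simp only [aIm, star_neg]
  module

lemma aIm_sub (a b : A) : aIm (a - b) = aIm a - aIm b := by
  simp only [aIm, star_sub]
  module

lemma aIm_sub_sa (a : A) {y : A} (hy : IsSelfAdjoint y) : aIm (a - y) = aIm a := by
  simp only [aIm, star_sub, hy.star_eq]
  module

lemma I_smul_aIm (a : A) : Complex.I • aIm a = (2⁻¹ : ℂ) • (a - star a) := by
  rw [aIm, smul_smul]
  congr 1
  field_simp

lemma eq_re_add_im (a : A) : a = (2⁻¹ : ℂ) • (a + star a) + Complex.I • aIm a := by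
  rw [I_smul_aIm]; module

lemma aIm_ring_inverse {v : A} (hv : IsUnit v) :
    aIm (Ring.inverse v) = -(Ring.inverse v * aIm v * star (Ring.inverse v)) := by
  have h1 : Ring.inverse v * v = 1 := Ring.inverse_mul_cancel v hv
  have h2 : star v * star (Ring.inverse v) = 1 := by
    rw [← star_mul, h1, star_one]
  have key : Ring.inverse v * (v - star v) * star (Ring.inverse v)
      = star (Ring.inverse v) - Ring.inverse v := by
    rw [mul_sub, sub_mul, h1, one_mul, mul_assoc, h2, mul_one]
  rw [aIm, aIm, mul_smul_comm, smul_mul_assoc, key, ← smul_neg, neg_sub]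

end Helpers
section Helpers2

variable {A : Type*} [CStarAlgebra A] [PartialOrder A] [StarOrderedRing A]

lemma sp_conj {k : A} (hk : StrictlyPos k) {c : A} (hc : IsUnit c) :
    StrictlyPos (c * k * star c) := by
  refine ⟨?_, star_right_conjugate_nonneg hk.2.1 c, (hc.mul hk.2.2).mul hc.star⟩
  rw [IsSelfAdjoint, star_mul, star_mul, star_star, hk.1.star_eq, mul_assoc]

lemma sp_of_le {k m : A} (hk : StrictlyPos k) (hm : IsSelfAdjoint m) (h : k ≤ m) :
    StrictlyPos m :=
  ⟨hm, hk.2.1.trans h, CStarAlgebra.isUnit_of_le k h (hk.2.2.isStrictlyPositive hk.2.1)⟩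

lemma sp_algebraMap {r : ℝ} (hr : 0 < r) : StrictlyPos (algebraMap ℝ A r) := by
  have hnn : 0 ≤ algebraMap ℝ A r := by
    have : algebraMap ℝ A r = star (algebraMap ℝ A (Real.sqrt r)) * algebraMap ℝ A (Real.sqrt r) := by
      rw [← algebraMap_star_comm, star_trivial, ← map_mul, Real.mul_self_sqrt hr.le]
    rw [this]
    exact star_mul_self_nonneg _
  refine ⟨?_, hnn, (isUnit_iff_ne_zero.mpr hr.ne').map (algebraMap ℝ A)⟩
  rw [IsSelfAdjoint, ← algebraMap_star_comm, star_trivial]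

lemma sp_exists {k : A} (hk : StrictlyPos k) : ∃ r : ℝ, 0 < r ∧ algebraMap ℝ A r ≤ k := by
  rcases subsingleton_or_nontrivial A with hA | hA
  · exact ⟨1, one_pos, (Subsingleton.elim _ _ : algebraMap ℝ A 1 = k) ▸ le_refl _⟩
  · have hspec : ∀ x ∈ spectrum ℝ k, 0 < x := by
      intro x hx
      refine lt_of_le_of_ne (spectrum_nonneg_of_nonneg hk.2.1 hx) ?_
      intro h0
      exact (spectrum.zero_notMem_iff ℝ).mpr hk.2.2 (h0 ▸ hx)
    obtain ⟨r, hr, hle⟩ := (CFC.exists_pos_algebraMap_le_iff (a := k) hk.1).mpr hspec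
    exact ⟨r, hr, hle⟩

lemma sp_inverse {k : A} (hk : StrictlyPos k) : StrictlyPos (Ring.inverse k) := by
  have hsa : IsSelfAdjoint (Ring.inverse k) := by
    rw [IsSelfAdjoint, ← Ring.inverse_star, hk.1.star_eq]
  have hconj : Ring.inverse k = Ring.inverse k * k * star (Ring.inverse k) := by
    rw [mul_assoc, ← hk.1.star_eq, ← star_mul, hk.1.star_eq, Ring.inverse_mul_cancel k hk.2.2,
      star_one, mul_one]
  refine ⟨hsa, ?_, isUnit_ringInverse.mpr hk.2.2⟩
  rw [hconj]
  exact star_right_conjugate_nonneg hk.2.1 _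

lemma isUnit_of_sp_aIm {v : A} (h : StrictlyPos (aIm v)) : IsUnit v := by
  obtain ⟨hksa, hknn, hkU⟩ := h
  set k := aIm v with hk
  set s := CFC.sqrt k with hs
  have hs0 : 0 ≤ s := CFC.sqrt_nonneg k
  have hss : s * s = k := CFC.sqrt_mul_sqrt_self k hknn
  have hsU : IsUnit s := by
    refine isUnit_of_one_sided (x := Ring.inverse k * s) (y := s * Ring.inverse k) ?_ ?_
    · rw [mul_assoc, hss, Ring.inverse_mul_cancel k hkU]
    · rw [← mul_assoc, hss, Ring.mul_inverse_cancel k hkU]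
  set si := Ring.inverse s with hsi
  have hsis : si * s = 1 := Ring.inverse_mul_cancel s hsU
  have hssi : s * si = 1 := Ring.mul_inverse_cancel s hsU
  have hsisa : star si = si := by rw [hsi, ← Ring.inverse_star, (IsSelfAdjoint.of_nonneg hs0).star_eq]
  set a := (2⁻¹ : ℂ) • (v + star v) with ha
  have hasa : IsSelfAdjoint a := by
    rw [IsSelfAdjoint, ha, star_smul, star_add, star_star, add_comm]
    congr 1
    simp [Complex.star_def, map_inv₀]
  set c := si * a * si with hc
  have hcsa : IsSelfAdjoint c := by
    rw [IsSelfAdjoint, hc, star_mul, star_mul, hsisa, hasa.star_eq, mul_assoc]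
  have hscs : s * c * s = a := by
    rw [hc, ← mul_assoc, ← mul_assoc, hssi, one_mul, mul_assoc, hsis, mul_one]
  have key : v = (Complex.I • s) * ((1 : A) - Complex.I • c) * s := by
    have expand : (Complex.I • s) * ((1 : A) - Complex.I • c) * s
        = Complex.I • (s * s) + s * c * s := by
      rw [mul_one_sub, sub_mul, smul_mul_assoc]
      rw [smul_mul_smul_comm, Complex.I_mul_I, smul_mul_assoc, neg_one_smul, sub_neg_eq_add]
    rw [expand, hss, hscs]
    rw [add_comm]
    exact eq_re_add_im v
  have hccnn : 0 ≤ c * c := by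
    have := star_mul_self_nonneg c
    rwa [hcsa.star_eq] at this
  have honeU : IsUnit ((1 : A) + c * c) :=
    CStarAlgebra.isUnit_of_le 1 (le_add_of_nonneg_right hccnn) (isUnit_one.isStrictlyPositive zero_le_one)
  set d := (1 : A) - Complex.I • c with hd
  have hstard : star d = (1 : A) + Complex.I • c := by
    rw [hd, star_sub, star_one, star_smul, Complex.star_def, Complex.conj_I, hcsa.star_eq,
      neg_smul, sub_neg_eq_add]
  have hIcIc : (Complex.I • c) * (Complex.I • c) = -(c * c) := by
    rw [smul_mul_smul_comm, Complex.I_mul_I, neg_one_smul]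
  have expand2 : ∀ z : A, (1 - z) * (1 + z) = 1 - z * z := fun z => by noncomm_ring
  have expand3 : ∀ z : A, (1 + z) * (1 - z) = 1 - z * z := fun z => by noncomm_ring
  have hdd : d * star d = 1 + c * c := by
    rw [hd, hstard, expand2, hIcIc, sub_neg_eq_add]
  have hdd' : star d * d = 1 + c * c := by
    rw [hstard, hd, expand3, hIcIc, sub_neg_eq_add]
  have hdU : IsUnit d := by
    refine isUnit_of_one_sided (x := Ring.inverse (1 + c * c) * star d)
      (y := star d * Ring.inverse (1 + c * c)) ?_ ?_
    · rw [mul_assoc, hdd', Ring.inverse_mul_cancel _ honeU]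
    · rw [← mul_assoc, hdd, Ring.mul_inverse_cancel _ honeU]
  have hIsU : IsUnit (Complex.I • s) := by
    rw [Algebra.smul_def]
    exact ((isUnit_iff_ne_zero.mpr Complex.I_ne_zero).map (algebraMap ℂ A)).mul hsU
  rw [key]
  exact (hIsU.mul hdU).mul hsU

end Helpers2
section ELemmas

variable {A : Type*} [CStarAlgebra A] [PartialOrder A] [StarOrderedRing A]
  {B : StarSubalgebra ℂ A} {E : A →ₗ[ℂ] A}

lemma aIm_mem {a : A} (ha : a ∈ B) : aIm a ∈ B :=
  B.smul_mem (sub_mem ha (star_mem ha)) _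

lemma inv_mem (hBclosed : IsClosed (B : Set A)) {a : A} (ha : a ∈ B) (hu : IsUnit a) :
    Ring.inverse a ∈ B := by
  have hu' : IsUnit (⟨a, ha⟩ : B) :=
    (StarSubalgebra.coe_isUnit (hS := hBclosed) (a := (⟨a, ha⟩ : B))).mp hu
  obtain ⟨u, hu2⟩ := hu'
  have h1 : ((⟨a, ha⟩ : B) : A) * (((u⁻¹ : Bˣ) : B) : A) = 1 := by
    rw [← hu2]
    exact congrArg Subtype.val u.mul_inv
  have h2 : Ring.inverse a = (((u⁻¹ : Bˣ) : B) : A) := by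
    have h3 : Ring.inverse a = Ring.inverse a * (a * (((u⁻¹ : Bˣ) : B) : A)) := by
      rw [show a * (((u⁻¹ : Bˣ) : B) : A) = 1 from h1, mul_one]
    rwa [← mul_assoc, Ring.inverse_mul_cancel a hu, one_mul] at h3
  rw [h2]
  exact ((u⁻¹ : Bˣ) : B).2

lemma E_map_algebraMap (hE1 : E 1 = 1) (r : ℝ) : E (algebraMap ℝ A r) = algebraMap ℝ A r := by
  rw [IsScalarTower.algebraMap_apply ℝ ℂ A, Algebra.algebraMap_eq_smul_one, map_smul, hE1]

lemma E_mono (hEpos : ∀ a : A, 0 ≤ a → 0 ≤ E a) {a b : A} (h : a ≤ b) : E a ≤ E b := by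
  have := hEpos (b - a) (sub_nonneg.mpr h)
  rw [map_sub] at this
  exact sub_nonneg.mp this

lemma algebraMap_isSelfAdjoint (r : ℝ) : IsSelfAdjoint (algebraMap ℝ A r) := by
  rw [IsSelfAdjoint, ← algebraMap_star_comm, star_trivial]

lemma E_selfAdjoint (hE1 : E 1 = 1) (hEpos : ∀ a : A, 0 ≤ a → 0 ≤ E a)
    {a : A} (ha : IsSelfAdjoint a) : IsSelfAdjoint (E a) := by
  have h1 : 0 ≤ a + algebraMap ℝ A ‖a‖ := by
    have h := ha.neg_algebraMap_norm_le_self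
    have := add_le_add_right h (algebraMap ℝ A ‖a‖)
    rw [add_comm]
    simpa using this
  have h2 : IsSelfAdjoint (E (a + algebraMap ℝ A ‖a‖)) := .of_nonneg (hEpos _ h1)
  have h3 : E a = E (a + algebraMap ℝ A ‖a‖) - algebraMap ℝ A ‖a‖ := by
    rw [map_add, E_map_algebraMap hE1, add_sub_cancel_right]
  rw [h3]
  exact h2.sub (algebraMap_isSelfAdjoint ‖a‖)

lemma re_isSelfAdjoint (a : A) : IsSelfAdjoint ((2⁻¹ : ℂ) • (a + star a)) := by
  rw [IsSelfAdjoint, star_smul, star_add, star_star, add_comm]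
  congr 1
  simp [Complex.star_def, map_inv₀]

lemma star_eq_re_sub_im (a : A) :
    star a = (2⁻¹ : ℂ) • (a + star a) - Complex.I • aIm a := by
  calc star a = star ((2⁻¹ : ℂ) • (a + star a) + Complex.I • aIm a) := by
        rw [← eq_re_add_im a]
    _ = (2⁻¹ : ℂ) • (a + star a) - Complex.I • aIm a := by
        rw [star_add, (re_isSelfAdjoint a).star_eq, star_smul, Complex.star_def, Complex.conj_I,
          (aIm_isSelfAdjoint a).star_eq, neg_smul, ← sub_eq_add_neg]

lemma E_star (hE1 : E 1 = 1) (hEpos : ∀ a : A, 0 ≤ a → 0 ≤ E a) (a : A) :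
    E (star a) = star (E a) := by
  have h1 : IsSelfAdjoint (E (a + star a)) :=
    E_selfAdjoint hE1 hEpos (by rw [IsSelfAdjoint, star_add, star_star, add_comm])
  have h2 : IsSelfAdjoint (E (aIm a)) := E_selfAdjoint hE1 hEpos (aIm_isSelfAdjoint a)
  have hstar : star a = (2⁻¹ : ℂ) • (a + star a) - Complex.I • aIm a := by
    rw [I_smul_aIm]; module
  have hself : a = (2⁻¹ : ℂ) • (a + star a) + Complex.I • aIm a := by
    rw [I_smul_aIm]; module
  have h2c : star (2⁻¹ : ℂ) = 2⁻¹ := by simp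
  calc E (star a) = (2⁻¹ : ℂ) • E (a + star a) - Complex.I • E (aIm a) := by
        conv_lhs => rw [hstar, map_sub, map_smul, map_smul]
    _ = star ((2⁻¹ : ℂ) • E (a + star a) + Complex.I • E (aIm a)) := by
        rw [star_add, star_smul, star_smul, h1.star_eq, h2.star_eq, h2c, Complex.star_def,
          Complex.conj_I, neg_smul, ← sub_eq_add_neg]
    _ = star (E a) := by
        congr 1
        conv_rhs => rw [hself, map_add, map_smul, map_smul]

lemma E_aIm (hE1 : E 1 = 1) (hEpos : ∀ a : A, 0 ≤ a → 0 ≤ E a) (a : A) :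
    E (aIm a) = aIm (E a) := by
  rw [aIm, map_smul, map_sub, E_star hE1 hEpos, aIm]

lemma E_sp (hE1 : E 1 = 1) (hEpos : ∀ a : A, 0 ≤ a → 0 ≤ E a)
    {k : A} (hk : StrictlyPos k) : StrictlyPos (E k) := by
  obtain ⟨r, hr, hle⟩ := sp_exists hk
  have h := E_mono hEpos hle
  rw [E_map_algebraMap hE1] at h
  exact sp_of_le (sp_algebraMap hr) (E_selfAdjoint hE1 hEpos hk.1) h

lemma E_of_mem (hE1 : E 1 = 1)
    (hEbimod : ∀ b₁ ∈ B, ∀ b₂ ∈ B, ∀ a : A, E (b₁ * a * b₂) = b₁ * E a * b₂)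
    {b : A} (hb : b ∈ B) : E b = b := by
  have := hEbimod b hb 1 (one_mem B) 1
  simpa [hE1] using this

lemma E_mul_right (hEbimod : ∀ b₁ ∈ B, ∀ b₂ ∈ B, ∀ a : A, E (b₁ * a * b₂) = b₁ * E a * b₂)
    {b : A} (hb : b ∈ B) (a : A) : E (a * b) = E a * b := by
  have := hEbimod 1 (one_mem B) b hb a
  simpa using this

lemma E_mul_left (hEbimod : ∀ b₁ ∈ B, ∀ b₂ ∈ B, ∀ a : A, E (b₁ * a * b₂) = b₁ * E a * b₂)
    {b : A} (hb : b ∈ B) (a : A) : E (b * a) = b * E a := by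
  have := hEbimod b hb 1 (one_mem B) a
  simpa using this

end ELemmas
section Schwarz

variable {A : Type*} [CStarAlgebra A] [PartialOrder A] [StarOrderedRing A]
  {B : StarSubalgebra ℂ A} {E : A →ₗ[ℂ] A}

lemma gen_schwarz (hBclosed : IsClosed (B : Set A)) (hErange : ∀ a : A, E a ∈ B)
    (hE1 : E 1 = 1) (hEpos : ∀ a : A, 0 ≤ a → 0 ≤ E a)
    (hEbimod : ∀ b₁ ∈ B, ∀ b₂ ∈ B, ∀ a : A, E (b₁ * a * b₂) = b₁ * E a * b₂)
    (a : A) {k : A} (hk : StrictlyPos k) :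
    E a * Ring.inverse (E (Ring.inverse k)) * star (E a) ≤ E (a * k * star a) := by
  set ki := Ring.inverse k with hki0
  have hki : StrictlyPos ki := sp_inverse hk
  have hEki : StrictlyPos (E ki) := E_sp hE1 hEpos hki
  set X := Ring.inverse (E ki) with hX0
  have hX : StrictlyPos X := sp_inverse hEki
  have hXB : X ∈ B := inv_mem hBclosed (hErange ki) hEki.2.2
  set r := E a * X with hr
  have hrB : r ∈ B := B.mul_mem (hErange a) hXB
  have hrsB : star r ∈ B := star_mem hrB
  have hkki : k * ki = 1 := Ring.mul_inverse_cancel k hk.2.2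
  have hkik : ki * k = 1 := Ring.inverse_mul_cancel k hk.2.2
  have hstar : star (a - r * ki) = star a - ki * star r := by
    rw [star_sub, star_mul, hki.1.star_eq]
  have expand : (a - r * ki) * k * star (a - r * ki)
      = a * k * star a - a * (k * ki) * star r - r * star a + r * (ki * star r) := by
    rw [hstar]
    calc (a - r * ki) * k * (star a - ki * star r)
        = (a * k - r * (ki * k)) * (star a - ki * star r) := by rw [sub_mul, mul_assoc]
      _ = (a * k - r) * (star a - ki * star r) := by rw [hkik, mul_one]
      _ = a * k * star a - a * (k * ki) * star r - r * star a + r * (ki * star r) := by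
          noncomm_ring
  have h0 : 0 ≤ E ((a - r * ki) * k * star (a - r * ki)) :=
    hEpos _ (star_right_conjugate_nonneg hk.2.1 _)
  rw [expand, hkki, mul_one] at h0
  rw [map_add, map_sub, map_sub] at h0
  have e1 : E (a * star r) = E a * star r := E_mul_right hEbimod hrsB a
  have e2 : E (r * star a) = r * star (E a) := by
    rw [E_mul_left hEbimod hrB, E_star hE1 hEpos]
  have e3 : E (r * (ki * star r)) = r * E ki * star r := by
    rw [← mul_assoc]
    exact hEbimod r hrB (star r) hrsB ki
  rw [e1, e2, e3] at h0
  have hstarr : star r = X * star (E a) := by rw [hr, star_mul, hX.1.star_eq]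
  have hXE : X * E ki = 1 := Ring.inverse_mul_cancel _ hEki.2.2
  have hT1 : E a * star r = E a * X * star (E a) := by rw [hstarr, mul_assoc]
  have hT2 : r * star (E a) = E a * X * star (E a) := by rw [hr]
  have hT3 : r * E ki * star r = E a * X * star (E a) := by
    rw [hr, hstarr]
    calc E a * X * E ki * (X * star (E a))
        = E a * (X * E ki) * (X * star (E a)) := by rw [mul_assoc (E a)]
      _ = E a * (X * star (E a)) := by rw [hXE, mul_one]
      _ = E a * X * star (E a) := by rw [← mul_assoc]
  rw [hT1, hT2, hT3] at h0
  have hsimp : E (a * k * star a) - E a * X * star (E a) - E a * X * star (E a)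
      + E a * X * star (E a) = E (a * k * star a) - E a * X * star (E a) := by abel
  rw [hsimp] at h0
  exact sub_nonneg.mp h0

lemma w_schwarz (hBclosed : IsClosed (B : Set A)) (hErange : ∀ a : A, E a ∈ B)
    (hE1 : E 1 = 1) (hEpos : ∀ a : A, 0 ≤ a → 0 ≤ E a)
    (hEbimod : ∀ b₁ ∈ B, ∀ b₂ ∈ B, ∀ a : A, E (b₁ * a * b₂) = b₁ * E a * b₂)
    {t : A} (htB : t ∈ B) (ht : 0 ≤ t) (a : A) :
    E a * t * star (E a) ≤ E (a * t * star a) := by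
  have htsa : IsSelfAdjoint t := .of_nonneg ht
  set D := E (a * t * star a) - E a * t * star (E a) with hD
  set S := E (a * star a) - E a * star (E a) with hS
  have key : ∀ δ : ℝ, 0 < δ → 0 ≤ D + (δ : ℂ) • S := by
    intro δ hδ
    have htδB : t + (δ : ℂ) • 1 ∈ B := B.add_mem htB (B.smul_mem (one_mem B) _)
    have halg : algebraMap ℝ A δ = (δ : ℂ) • (1 : A) := by
      rw [IsScalarTower.algebraMap_apply ℝ ℂ A, Algebra.algebraMap_eq_smul_one,
        Complex.coe_algebraMap]
    have hsp : StrictlyPos (t + (δ : ℂ) • 1) := by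
      refine sp_of_le (sp_algebraMap hδ) ?_ ?_
      · exact htsa.add (by rw [← halg]; exact algebraMap_isSelfAdjoint δ)
      · rw [halg]; exact le_add_of_nonneg_left ht
    have hEinv : E (Ring.inverse (t + (δ : ℂ) • 1)) = Ring.inverse (t + (δ : ℂ) • 1) :=
      E_of_mem hE1 hEbimod (inv_mem hBclosed htδB hsp.2.2)
    have hgs := gen_schwarz hBclosed hErange hE1 hEpos hEbimod a hsp
    rw [hEinv, ring_inverse_inverse hsp.2.2] at hgs
    have hL : E a * (t + (δ : ℂ) • 1) * star (E a)
        = E a * t * star (E a) + (δ : ℂ) • (E a * star (E a)) := by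
      rw [mul_add, add_mul]
      congr 1
      rw [mul_smul_comm, smul_mul_assoc, mul_one]
    have hR : a * (t + (δ : ℂ) • 1) * star a = a * t * star a + (δ : ℂ) • (a * star a) := by
      rw [mul_add, add_mul]
      congr 1
      rw [mul_smul_comm, smul_mul_assoc, mul_one]
    rw [hL, hR, map_add, map_smul] at hgs
    have h1 := sub_nonneg.mpr hgs
    have heq : E (a * t * star a) + (δ : ℂ) • E (a * star a)
        - (E a * t * star (E a) + (δ : ℂ) • (E a * star (E a))) = D + (δ : ℂ) • S := by
      rw [hD, hS, smul_sub]; abel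
    rwa [heq] at h1
  have hlim : Filter.Tendsto (fun n : ℕ => D + ((1 / (n + 1) : ℝ) : ℂ) • S)
      Filter.atTop (nhds D) := by
    have h1 : Filter.Tendsto (fun n : ℕ => (1 / (n + 1) : ℝ)) Filter.atTop (nhds 0) :=
      tendsto_one_div_add_atTop_nhds_zero_nat
    have h2 : Filter.Tendsto (fun n : ℕ => ((1 / (n + 1) : ℝ) : ℂ)) Filter.atTop (nhds 0) := by
      simpa [Function.comp_def] using (Complex.continuous_ofReal.tendsto 0).comp h1
    have h3 : Filter.Tendsto (fun n : ℕ => ((1 / (n + 1) : ℝ) : ℂ) • S) Filter.atTop (nhds 0) := by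
      simpa using h2.smul_const S
    simpa using (tendsto_const_nhds (x := D) (f := Filter.atTop)).add h3
  have hmem : D ∈ {x : A | 0 ≤ x} :=
    CStarAlgebra.isClosed_nonneg.mem_of_tendsto hlim
      (Filter.Eventually.of_forall fun n => key _ (by positivity))
  exact sub_nonneg.mp hmem

end Schwarz
section Main

private lemma assoc5 {A : Type*} [Ring A] (a b c d e : A) :
    a * (b * c * d) * e = (a * b) * c * (d * e) := by noncomm_ring

/-- For a conditional expectation `E` onto a C*-subalgebra `B`, `x > 0`, `y = y*`,
`b ∈ B` with `Im(bx) > 0` and `w ∈ B` with `Im w > 0`: `h_y(w)` is well defined, and if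
`h_y(w)` is invertible then all elements needed to form `g_b(w) = b h_x(h_y(w) b)` are
invertible and `Im (b h_x(h_y(w) b)) ≥ E[(Im(bx))⁻¹]⁻¹ > 0`. -/
theorem stmt_4 {A : Type*} [CStarAlgebra A] [PartialOrder A] [StarOrderedRing A]
    (B : StarSubalgebra ℂ A) (hBclosed : IsClosed (B : Set A))
    (E : A →ₗ[ℂ] A) (hErange : ∀ a : A, E a ∈ B)
    (hE1 : E 1 = 1) (hEpos : ∀ a : A, 0 ≤ a → 0 ≤ E a)
    (hEbimod : ∀ b₁ ∈ B, ∀ b₂ ∈ B, ∀ a : A, E (b₁ * a * b₂) = b₁ * E a * b₂)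
    (x y : A) (hx : StrictlyPos x) (hy : IsSelfAdjoint y)
    (b : A) (hbB : b ∈ B) (hbx : StrictlyPos (aIm (b * x)))
    (w : A) (hwB : w ∈ B) (hw : StrictlyPos (aIm w)) :
    (IsUnit w ∧ IsUnit (Ring.inverse w - y) ∧
      IsUnit (E (Ring.inverse (Ring.inverse w - y)))) ∧
    (IsUnit (hT E y w) →
      IsUnit (hT E y w * b) ∧
      IsUnit (Ring.inverse (hT E y w * b) - x) ∧
      IsUnit (E (Ring.inverse (Ring.inverse (hT E y w * b) - x))) ∧
      StrictlyPos (Ring.inverse (E (Ring.inverse (aIm (b * x))))) ∧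
      Ring.inverse (E (Ring.inverse (aIm (b * x)))) ≤
        aIm (b * hT E x (hT E y w * b))) := by
  -- Part 1
  have hwU : IsUnit w := isUnit_of_sp_aIm hw
  set wi := Ring.inverse w with hwi
  have hwiU : IsUnit wi := isUnit_ringInverse.mpr hwU
  have hwiB : wi ∈ B := inv_mem hBclosed hwB hwU
  set k0 := wi * aIm w * star wi with hk0
  have hk0sp : StrictlyPos k0 := sp_conj hw hwiU
  have hk0B : k0 ∈ B := mul_mem (mul_mem hwiB (aIm_mem hwB)) (star_mem hwiB)
  have haimwi : aIm wi = -k0 := by rw [hwi, aIm_ring_inverse hwU]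
  set m1 := wi - y with hm1
  have haimm1 : aIm m1 = -k0 := by rw [hm1, aIm_sub_sa _ hy, haimwi]
  have hm1U : IsUnit m1 := by
    have hsp : StrictlyPos (aIm (-m1)) := by rw [aIm_neg, haimm1, neg_neg]; exact hk0sp
    simpa using (isUnit_of_sp_aIm hsp).neg
  set u := Ring.inverse m1 with hu
  have huU : IsUnit u := isUnit_ringInverse.mpr hm1U
  have haimu : aIm u = u * k0 * star u := by
    rw [hu, aIm_ring_inverse hm1U, haimm1, mul_neg, neg_mul, neg_neg]
  have haimusp : StrictlyPos (aIm u) := by rw [haimu]; exact sp_conj hk0sp huU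
  have hEusp : StrictlyPos (aIm (E u)) := by
    rw [← E_aIm hE1 hEpos]; exact E_sp hE1 hEpos haimusp
  have hEuU : IsUnit (E u) := isUnit_of_sp_aIm hEusp
  refine ⟨⟨hwU, hm1U, hEuU⟩, ?_⟩
  intro hh
  set h := hT E y w with hhdef
  have hhe : h = wi - Ring.inverse (E u) := rfl
  have hEuiB : Ring.inverse (E u) ∈ B := inv_mem hBclosed (hErange u) hEuU
  have hhB : h ∈ B := by rw [hhe]; exact B.sub_mem hwiB hEuiB
  -- Im h ≥ 0
  have haimEu : aIm (E u) = E (aIm u) := (E_aIm hE1 hEpos u).symm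
  have hk0iB : Ring.inverse k0 ∈ B := inv_mem hBclosed hk0B hk0sp.2.2
  have hEk0i : E (Ring.inverse k0) = Ring.inverse k0 := E_of_mem hE1 hEbimod hk0iB
  have hgs := gen_schwarz hBclosed hErange hE1 hEpos hEbimod u hk0sp
  rw [hEk0i, ring_inverse_inverse hk0sp.2.2] at hgs
  have hcEu : Ring.inverse (E u) * E u = 1 := Ring.inverse_mul_cancel _ hEuU
  have hEuc : star (E u) * star (Ring.inverse (E u)) = 1 := by
    rw [← star_mul, hcEu, star_one]
  have hleft : Ring.inverse (E u) * (E u * k0 * star (E u)) * star (Ring.inverse (E u))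
      = k0 := by
    rw [assoc5, hcEu, hEuc, one_mul, mul_one]
  have him_h : (0 : A) ≤ aIm h := by
    have h1 : aIm (Ring.inverse (E u)) =
        -(Ring.inverse (E u) * E (aIm u) * star (Ring.inverse (E u))) := by
      rw [aIm_ring_inverse hEuU, haimEu]
    have haimh : aIm h = -k0
        + Ring.inverse (E u) * E (aIm u) * star (Ring.inverse (E u)) := by
      rw [hhe, aIm_sub, haimwi, h1, sub_neg_eq_add]
    rw [haimh]
    have h2 : k0 ≤ Ring.inverse (E u) * E (aIm u) * star (Ring.inverse (E u)) := by
      rw [haimu]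
      calc k0 = Ring.inverse (E u) * (E u * k0 * star (E u)) * star (Ring.inverse (E u)) :=
            hleft.symm
        _ ≤ Ring.inverse (E u) * E (u * k0 * star u) * star (Ring.inverse (E u)) :=
            star_right_conjugate_le_conjugate hgs _
    rw [neg_add_eq_sub]
    exact sub_nonneg.mpr h2
  -- b is a unit
  have hbxU : IsUnit (b * x) := isUnit_of_sp_aIm hbx
  have hbU : IsUnit b := by
    have hb : b = (b * x) * Ring.inverse x := by
      rw [mul_assoc, Ring.mul_inverse_cancel x hx.2.2, mul_one]
    rw [hb]; exact hbxU.mul (isUnit_ringInverse.mpr hx.2.2)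
  have hvU : IsUnit (h * b) := hh.mul hbU
  -- t
  have hhiU : IsUnit (Ring.inverse h) := isUnit_ringInverse.mpr hh
  have hhiB : Ring.inverse h ∈ B := inv_mem hBclosed hhB hh
  set t := Ring.inverse h * aIm h * star (Ring.inverse h) with ht
  have htnn : 0 ≤ t := star_right_conjugate_nonneg him_h _
  have htB : t ∈ B := mul_mem (mul_mem hhiB (aIm_mem hhB)) (star_mem hhiB)
  have haimhi : aIm (Ring.inverse h) = -t := by rw [aIm_ring_inverse hh, ht]
  set k' := aIm (b * x) with hk'
  set m := Ring.inverse h - b * x with hm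
  have haimm : aIm m = -(t + k') := by
    rw [hm, aIm_sub, haimhi, hk']
    abel
  have htk'sp : StrictlyPos (t + k') := by
    refine sp_of_le hbx ?_ (le_add_of_nonneg_left htnn)
    exact (IsSelfAdjoint.of_nonneg htnn).add (aIm_isSelfAdjoint _)
  have hmU : IsUnit m := by
    have hsp : StrictlyPos (aIm (-m)) := by rw [aIm_neg, haimm, neg_neg]; exact htk'sp
    simpa using (isUnit_of_sp_aIm hsp).neg
  have hinvhb : Ring.inverse (h * b) = Ring.inverse b * Ring.inverse h :=
    ring_inverse_mul hh hbU
  have hvx : Ring.inverse (h * b) - x = Ring.inverse b * m := by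
    rw [hinvhb, hm, mul_sub, ← mul_assoc, Ring.inverse_mul_cancel b hbU, one_mul]
  have hvxU : IsUnit (Ring.inverse (h * b) - x) := by
    rw [hvx]; exact (isUnit_ringInverse.mpr hbU).mul hmU
  set q := Ring.inverse m with hq
  have hqU : IsUnit q := isUnit_ringInverse.mpr hmU
  have hp : Ring.inverse (Ring.inverse (h * b) - x) = q * b := by
    rw [hvx, ring_inverse_mul (isUnit_ringInverse.mpr hbU) hmU, ring_inverse_inverse hbU]
  have haimq : aIm q = q * (t + k') * star q := by
    rw [hq, aIm_ring_inverse hmU, haimm, mul_neg, neg_mul, neg_neg]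
  have haimqsp : StrictlyPos (aIm q) := by rw [haimq]; exact sp_conj htk'sp hqU
  have hEqsp : StrictlyPos (aIm (E q)) := by
    rw [← E_aIm hE1 hEpos]; exact E_sp hE1 hEpos haimqsp
  have hEqU : IsUnit (E q) := isUnit_of_sp_aIm hEqsp
  have hEpU : IsUnit (E (Ring.inverse (Ring.inverse (h * b) - x))) := by
    rw [hp, E_mul_right hEbimod hbB]
    exact hEqU.mul hbU
  have hXsp : StrictlyPos (Ring.inverse (E (Ring.inverse k'))) :=
    sp_inverse (E_sp hE1 hEpos (sp_inverse hbx))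
  refine ⟨hvU, hvxU, hEpU, hXsp, ?_⟩
  -- final inequality
  set X := Ring.inverse (E (Ring.inverse k')) with hX
  have hbp : b * Ring.inverse (E (Ring.inverse (Ring.inverse (h * b) - x)))
      = Ring.inverse (E q) := by
    rw [hp, E_mul_right hEbimod hbB, ring_inverse_mul hEqU hbU, ← mul_assoc,
      Ring.mul_inverse_cancel b hbU, one_mul]
  have hg : b * hT E x (h * b) = Ring.inverse h - Ring.inverse (E q) := by
    rw [hT, mul_sub, hbp, hinvhb, ← mul_assoc, Ring.mul_inverse_cancel b hbU, one_mul]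
  have hcqU : IsUnit (Ring.inverse (E q)) := isUnit_ringInverse.mpr hEqU
  have hcqEq : Ring.inverse (E q) * E q = 1 := Ring.inverse_mul_cancel _ hEqU
  have hEqcq : star (E q) * star (Ring.inverse (E q)) = 1 := by
    rw [← star_mul, hcqEq, star_one]
  have hw1 := w_schwarz hBclosed hErange hE1 hEpos hEbimod htB htnn q
  have hg1 := gen_schwarz hBclosed hErange hE1 hEpos hEbimod q hbx
  have hEaimq : E (aIm q) = E (q * t * star q) + E (q * k' * star q) := by
    rw [haimq, mul_add, add_mul, map_add]
  have hsum : E q * t * star (E q) + E q * X * star (E q) ≤ E (aIm q) := by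
    rw [hEaimq]
    exact add_le_add hw1 hg1
  have hconj2 := star_right_conjugate_le_conjugate hsum (Ring.inverse (E q))
  have hL1 : Ring.inverse (E q) * (E q * t * star (E q)) * star (Ring.inverse (E q)) = t := by
    rw [assoc5, hcqEq, hEqcq, one_mul, mul_one]
  have hL2 : Ring.inverse (E q) * (E q * X * star (E q)) * star (Ring.inverse (E q)) = X := by
    rw [assoc5, hcqEq, hEqcq, one_mul, mul_one]
  have hL : Ring.inverse (E q) * (E q * t * star (E q) + E q * X * star (E q))
      * star (Ring.inverse (E q)) = t + X := by
    rw [mul_add, add_mul, hL1, hL2]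
  rw [hL] at hconj2
  have haimfinal : aIm (b * hT E x (h * b)) = -t
      + Ring.inverse (E q) * E (aIm q) * star (Ring.inverse (E q)) := by
    have h1 : aIm (Ring.inverse (E q)) =
        -(Ring.inverse (E q) * E (aIm q) * star (Ring.inverse (E q))) := by
      rw [aIm_ring_inverse hEqU, E_aIm hE1 hEpos]
    rw [hg, aIm_sub, haimhi, h1, sub_neg_eq_add]
  calc X = -t + (t + X) := by abel
    _ ≤ -t + Ring.inverse (E q) * E (aIm q) * star (Ring.inverse (E q)) :=
        add_le_add_right hconj2 _
    _ = aIm (b * hT E x (h * b)) := haimfinal.symm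

end Main
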